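/- For the rested single-armed bandit with availability process (θ^0(π,0) = 0): for every π ∈ [0,1] and subsidy w ∈ ℝ, if (π,1) ∈ G(w), i.e. V_S(π; w) ≤ V_NS(π; w), then V(π; w) = max{ E^{φ0}_{π,1}[ Σ_{t=1}^{∞} β^{t−1}( w·1{Y(t)=1} + ξ(π)·1{Y(t)=0} ) ], w/(1 − β) }, where φ0 is the policy that rests the arm whenever it is available and plays it whenever it is unavailable; under φ0 the belief remains π for all time (the rested arm's state is frozen whenever it is unavailable or not played), and the availability chain (Y(t))_{t≥1} starts at Y(1) = 1 and evolves as: from Y(t) = 1 (arm rested) the next availability equals 1 with probability θ^0(π,1), and from Y(t) = 0 (arm played) the next availability equals 1 with probability θ^1(π,0). -/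
import Mathlib


/-!
Single-armed hidden-Markov bandit with subsidy (rested or restless model).

`θ a y π` is the availability probability `θ^a(π, y)` where `a` is the action
(`true` = play), `y` is the current availability (`true` = available), and `π`
is the belief (probability that the hidden state is 0).
-/

structure BanditParams where
  /-- `true` for the rested model, `false` for the restless model. -/
  rested : Bool
  β : ℝ
  η0 : ℝ
  r0 : ℝ
  η1 : ℝ
  r1 : ℝ
  μ0 : ℝ
  μ1 : ℝ
  θ : Bool → Bool → ℝ → ℝ

namespace BanditParams

variable (P : BanditParams)

/-- Expected immediate reward (= success probability) when playing an available arm. -/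
noncomputable def ρ (π : ℝ) : ℝ := π * P.r0 + (1 - π) * P.r1

/-- Expected immediate reward when playing an unavailable arm. -/
noncomputable def ξ (π : ℝ) : ℝ := π * P.η0 + (1 - π) * P.η1

/-- Bayes belief update after a successful play of an available arm. -/
noncomputable def γ11 (π : ℝ) : ℝ :=
  (π * P.r0 * P.μ0 + (1 - π) * P.r1 * P.μ1) / (π * P.r0 + (1 - π) * P.r1)

/-- Bayes belief update after an unsuccessful play of an available arm. -/
noncomputable def γ01 (π : ℝ) : ℝ :=
  (π * (1 - P.r0) * P.μ0 + (1 - π) * (1 - P.r1) * P.μ1) /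
    (π * (1 - P.r0) + (1 - π) * (1 - P.r1))

/-- Belief update after a successful play of an unavailable arm. -/
noncomputable def γ10 (π : ℝ) : ℝ := if P.rested then π else P.γ11 π

/-- Belief update after an unsuccessful play of an unavailable arm. -/
noncomputable def γ00 (π : ℝ) : ℝ := if P.rested then π else P.γ01 π

/-- Belief update when an available arm is not played. -/
noncomputable def Γ1 (π : ℝ) : ℝ := if P.rested then π else π * P.μ0 + (1 - π) * P.μ1

/-- Belief update when an unavailable arm is not played. -/
noncomputable def Γ0 (_P : BanditParams) (π : ℝ) : ℝ := π

/-- Standing assumptions on the model parameters. -/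
structure Valid : Prop where
  hβ0 : 0 < P.β
  hβ1 : P.β < 1
  hη0 : 0 ≤ P.η0
  hη0r0 : P.η0 < P.r0
  hr0η1 : P.r0 < P.η1
  hη1r1 : P.η1 < P.r1
  hr1 : P.r1 ≤ 1
  hμ0 : P.μ0 ∈ Set.Icc (0 : ℝ) 1
  hμ1 : P.μ1 ∈ Set.Icc (0 : ℝ) 1
  hθ : ∀ a y π, π ∈ Set.Icc (0 : ℝ) 1 → P.θ a y π ∈ Set.Icc (0 : ℝ) 1

/-- `VS, VNS, VtS, VtNS, V, Vt` form the (unique bounded) solution of the dynamic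
program for subsidy `w`: `VS = V_S`, `VNS = V_NS`, `VtS = Ṽ_S`, `VtNS = Ṽ_NS`,
`V = max (V_S, V_NS)`, `Vt = max (Ṽ_S, Ṽ_NS)`. -/
structure IsSolution (w : ℝ) (VS VNS VtS VtNS V Vt : ℝ → ℝ) : Prop where
  bounded : ∃ M, ∀ π ∈ Set.Icc (0 : ℝ) 1, |V π| ≤ M ∧ |Vt π| ≤ M
  eqVS : ∀ π ∈ Set.Icc (0 : ℝ) 1, VS π =
    P.ρ π + P.β * (P.ρ π * (P.θ true true π * V (P.γ11 π)
        + (1 - P.θ true true π) * Vt (P.γ11 π))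
      + (1 - P.ρ π) * (P.θ true true π * V (P.γ01 π)
        + (1 - P.θ true true π) * Vt (P.γ01 π)))
  eqVNS : ∀ π ∈ Set.Icc (0 : ℝ) 1, VNS π =
    w + P.β * (P.θ false true π * V (P.Γ1 π) + (1 - P.θ false true π) * Vt (P.Γ1 π))
  eqVtS : ∀ π ∈ Set.Icc (0 : ℝ) 1, VtS π =
    P.ξ π + P.β * (P.ρ π * (P.θ true false π * V (P.γ10 π)
        + (1 - P.θ true false π) * Vt (P.γ10 π))
      + (1 - P.ρ π) * (P.θ true false π * V (P.γ00 π)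
        + (1 - P.θ true false π) * Vt (P.γ00 π)))
  eqVtNS : ∀ π ∈ Set.Icc (0 : ℝ) 1, VtNS π =
    w + P.β * (P.θ false false π * V (P.Γ0 π) + (1 - P.θ false false π) * Vt (P.Γ0 π))
  eqV : ∀ π ∈ Set.Icc (0 : ℝ) 1, V π = max (VS π) (VNS π)
  eqVt : ∀ π ∈ Set.Icc (0 : ℝ) 1, Vt π = max (VtS π) (VtNS π)

end BanditParams

open Set BanditParams


/-- Availability process `Y(t)` (`t = n+1` in the paper's indexing) as a function of the
sequence of availability outcomes: `Y(1) = 1`, and thereafter the `n`-th outcome. -/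
def restAvail (ω : ℕ → Bool) : ℕ → Bool
  | 0 => true
  | n + 1 => ω n

/-- One-step transition probability of the availability chain under the policy `φ0`
(rest when available, play when unavailable): from `y = 1` the arm is rested, so the
next availability is `1` with probability `θ^0(π,1)`; from `y = 0` the arm is played,
so the next availability is `1` with probability `θ^1(π,0)`. -/
noncomputable def restStepP (P : BanditParams) (π : ℝ) (y a : Bool) : ℝ :=
  if y then (if a then P.θ false true π else 1 - P.θ false true π)
  else (if a then P.θ true false π else 1 - P.θ true false π)

/-- Extend a finite outcome history to an infinite one. -/
def extendB {n : ℕ} (h : Fin n → Bool) : ℕ → Bool :=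
  fun i => if hi : i < n then h ⟨i, hi⟩ else false

/-- Probability weight of the first `n` steps of the availability chain under `φ0`. -/
noncomputable def restWeight (P : BanditParams) (π : ℝ) (ω : ℕ → Bool) (n : ℕ) : ℝ :=
  ∏ i ∈ Finset.range n, restStepP P π (restAvail ω i) (ω i)

/-- `E^{φ0}_{π,1}[ Σ_{t=1}^∞ β^{t−1} ( w·1{Y(t)=1} + ξ(π)·1{Y(t)=0} ) ]`:
the total expected discounted reward of the policy `φ0` started from `(π, 1)`
(under `φ0` the belief stays `π` forever, since the arm is rested). -/
noncomputable def restValue (P : BanditParams) (w π : ℝ) : ℝ :=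
  ∑' n : ℕ, P.β ^ n * ∑ h : Fin n → Bool,
    restWeight P π (extendB h) n * (if restAvail (extendB h) n then w else P.ξ π)

section Aux

lemma extendB_snoc_castSucc {n : ℕ} (h : Fin n → Bool) (b : Bool) (i : ℕ) (hi : i < n) :
    extendB (Fin.snoc h b : Fin (n+1) → Bool) i = extendB h i := by
  simp [extendB, hi, Nat.lt_succ_of_lt hi, Fin.snoc, Fin.castLT]

lemma restAvail_snoc {n : ℕ} (h : Fin n → Bool) (b : Bool) (i : ℕ) (hi : i ≤ n) :
    restAvail (extendB (Fin.snoc h b : Fin (n+1) → Bool)) i = restAvail (extendB h) i := by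
  cases i with
  | zero => rfl
  | succ j => simp [restAvail, extendB_snoc_castSucc h b j (by omega)]

lemma restAvail_snoc_top {n : ℕ} (h : Fin n → Bool) (b : Bool) :
    restAvail (extendB (Fin.snoc h b : Fin (n+1) → Bool)) (n+1) = b := by
  simp [restAvail, extendB, Fin.snoc]

lemma restWeight_snoc (P : BanditParams) (π : ℝ) {n : ℕ} (h : Fin n → Bool) (b : Bool) :
    restWeight P π (extendB (Fin.snoc h b : Fin (n+1) → Bool)) (n+1)
      = restWeight P π (extendB h) n * restStepP P π (restAvail (extendB h) n) b := by
  rw [restWeight, Finset.prod_range_succ]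
  congr 1
  · apply Finset.prod_congr rfl
    intro i hi
    rw [Finset.mem_range] at hi
    rw [restAvail_snoc h b i (le_of_lt hi), extendB_snoc_castSucc h b i hi]
  · rw [restAvail_snoc h b n le_rfl]
    congr 1
    simp [extendB, Fin.snoc]

/-- Probability that the availability chain started from `1` is at `1` after `n` steps. -/
noncomputable def chainP (a1 a0 : ℝ) : ℕ → ℝ
  | 0 => 1
  | n+1 => a1 * chainP a1 a0 n + a0 * (1 - chainP a1 a0 n)

lemma chainP_mem {a1 a0 : ℝ} (h1 : a1 ∈ Set.Icc (0:ℝ) 1) (h0 : a0 ∈ Set.Icc (0:ℝ) 1)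
    (n : ℕ) : chainP a1 a0 n ∈ Set.Icc (0:ℝ) 1 := by
  obtain ⟨h1a, h1b⟩ := h1; obtain ⟨h0a, h0b⟩ := h0
  induction n with
  | zero => constructor <;> norm_num [chainP]
  | succ n ih =>
    obtain ⟨ha, hb⟩ := ih
    constructor
    · simp only [chainP]; nlinarith
    · simp only [chainP]; nlinarith

lemma key_sum (P : BanditParams) (π : ℝ) (f : Bool → ℝ) (n : ℕ) :
    ∑ h : Fin n → Bool, restWeight P π (extendB h) n * f (restAvail (extendB h) n)
      = chainP (P.θ false true π) (P.θ true false π) n * f true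
        + (1 - chainP (P.θ false true π) (P.θ true false π) n) * f false := by
  induction n generalizing f with
  | zero =>
    simp [restWeight, chainP, restAvail]
  | succ n ih =>
    rw [← Equiv.sum_comp (Fin.snocEquiv (fun _ => Bool))
      (fun h => restWeight P π (extendB h) (n+1) * f (restAvail (extendB h) (n+1))),
      Fintype.sum_prod_type]
    have : ∀ (b : Bool) (h : Fin n → Bool),
        restWeight P π (extendB ((Fin.snocEquiv (fun _ => Bool)) (b, h))) (n+1)
          * f (restAvail (extendB ((Fin.snocEquiv (fun _ => Bool)) (b, h))) (n+1))
        = restWeight P π (extendB h) n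
            * (restStepP P π (restAvail (extendB h) n) b * f b) := by
      intro b h
      have he : (Fin.snocEquiv (fun _ => Bool)) (b, h) = Fin.snoc h b := rfl
      rw [he, restWeight_snoc, restAvail_snoc_top]; ring
    simp only [this]
    rw [Fintype.sum_bool]
    have e1 : ∀ b : Bool, ∑ h : Fin n → Bool, restWeight P π (extendB h) n
        * (restStepP P π (restAvail (extendB h) n) b * f b)
        = chainP (P.θ false true π) (P.θ true false π) n * (restStepP P π true b * f b)
          + (1 - chainP (P.θ false true π) (P.θ true false π) n)
            * (restStepP P π false b * f b) :=
      fun b => ih (fun y => restStepP P π y b * f b)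
    rw [e1 true, e1 false]
    simp only [restStepP, chainP, Bool.false_eq_true, if_true, if_false]
    ring

lemma restValue_formula (P : BanditParams) (hβ0 : 0 < P.β) (hβ1 : P.β < 1) (w π : ℝ)
    (h1 : P.θ false true π ∈ Set.Icc (0:ℝ) 1) (h0 : P.θ true false π ∈ Set.Icc (0:ℝ) 1) :
    restValue P w π * ((1 - P.β) * (1 - P.β * (P.θ false true π - P.θ true false π)))
      = P.ξ π * (1 - P.β * (P.θ false true π - P.θ true false π))
        + (w - P.ξ π) * (1 - P.β + P.β * P.θ true false π) := by
  set β := P.β with hβdef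
  set a1 := P.θ false true π
  set a0 := P.θ true false π
  set p := chainP a1 a0 with hpdef
  have hβ' : |β| < 1 := by rw [abs_of_pos hβ0]; exact hβ1
  have h1β : (1:ℝ) - β ≠ 0 := by nlinarith
  have hpn : ∀ n, p n ∈ Set.Icc (0:ℝ) 1 := chainP_mem h1 h0
  have hs0 : Summable (fun n : ℕ => β ^ n) := summable_geometric_of_lt_one hβ0.le hβ1
  have hs1 : Summable (fun n : ℕ => β ^ n * p n) := by
    apply Summable.of_nonneg_of_le (fun n => ?_) (fun n => ?_) hs0
    · have := (hpn n).1; positivity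
    · have := (hpn n).2
      have : β ^ n * p n ≤ β ^ n * 1 := by
        apply mul_le_mul_of_nonneg_left this (by positivity)
      simpa using this
  -- value of restValue as a series in p
  have hval : restValue P w π = ∑' n : ℕ, (P.ξ π * β ^ n + (w - P.ξ π) * (β ^ n * p n)) := by
    rw [restValue]
    apply tsum_congr
    intro n
    rw [key_sum P π (fun y => if y then w else P.ξ π) n]
    simp only [if_true, Bool.false_eq_true, if_false]
    ring
  have hgeom : ∑' n : ℕ, β ^ n = (1 - β)⁻¹ := tsum_geometric_of_lt_one hβ0.le hβ1
  -- Q equation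
  set Q := ∑' n : ℕ, β ^ n * p n with hQdef
  have hshift : ∀ n : ℕ, β ^ (n+1) * p (n+1)
      = β * (a1 - a0) * (β ^ n * p n) + β * a0 * β ^ n := by
    intro n
    show β ^ (n+1) * (a1 * p n + a0 * (1 - p n)) = _
    ring
  have hQeq : Q = 1 + (β * (a1 - a0) * Q + β * a0 * (1 - β)⁻¹) := by
    have h2 := Summable.tsum_eq_zero_add hs1
    have hp0 : p 0 = 1 := rfl
    conv_lhs => rw [hQdef, h2, tsum_congr hshift,
      Summable.tsum_add (hs1.mul_left _) (hs0.mul_left _), tsum_mul_left, tsum_mul_left, hgeom,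
      pow_zero, hp0, one_mul]
  have hQeq' : Q * (1 - β) = (1 - β) + (β * (a1 - a0) * Q * (1 - β) + β * a0) := by
    have h3 : β * a0 * (1 - β)⁻¹ * (1 - β) = β * a0 := by field_simp
    linear_combination (1 - β) * hQeq + h3
  -- restValue in terms of Q
  have hval2 : restValue P w π = P.ξ π * (1 - β)⁻¹ + (w - P.ξ π) * Q := by
    rw [hval, Summable.tsum_add (hs0.mul_left _) (hs1.mul_left _), tsum_mul_left, tsum_mul_left, hgeom]
  rw [hval2]
  have hξ : P.ξ π * (1 - β)⁻¹ * (1 - β) = P.ξ π := by field_simp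
  linear_combination (1 - β * (a1 - a0)) * hξ + (w - P.ξ π) * hQeq'
end Aux

set_option maxHeartbeats 1000000 in
/-- For the rested bandit with availability process (`θ^0(π,0) = 0`):
if `(π,1) ∈ G(w)`, i.e. `V_S(π) ≤ V_NS(π)`, then
`V(π) = max { E^{φ0}_{π,1}[Σ_t β^{t−1}(w·1{Y(t)=1} + ξ(π)·1{Y(t)=0})], w/(1−β) }`. -/
theorem value_available_in_G (P : BanditParams) (hP : P.Valid)
    (hrested : P.rested = true)
    (havail : ∀ π, P.θ false false π = 0)
    (w : ℝ) (VS VNS VtS VtNS V Vt : ℝ → ℝ)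
    (hsol : P.IsSolution w VS VNS VtS VtNS V Vt)
    (π : ℝ) (hπ : π ∈ Icc (0 : ℝ) 1)
    (hG : VS π ≤ VNS π) :
    V π = max (restValue P w π) (w / (1 - P.β)) := by
  have hβ0 := hP.hβ0
  have hβ1 := hP.hβ1
  have h1 : P.θ false true π ∈ Set.Icc (0:ℝ) 1 := hP.hθ false true π hπ
  have h0 : P.θ true false π ∈ Set.Icc (0:ℝ) 1 := hP.hθ true false π hπ
  have hβne : (1:ℝ) - P.β ≠ 0 := by nlinarith
  have hβpos : (0:ℝ) < 1 - P.β := by nlinarith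
  have hc : (0:ℝ) < 1 - P.β * (P.θ false true π - P.θ true false π) := by
    nlinarith [h1.1, h1.2, h0.1, h0.2]
  have hΓ1 : P.Γ1 π = π := by simp [BanditParams.Γ1, hrested]
  have hγ10 : P.γ10 π = π := by simp [BanditParams.γ10, hrested]
  have hγ00 : P.γ00 π = π := by simp [BanditParams.γ00, hrested]
  have hΓ0 : P.Γ0 π = π := rfl
  have eV : V π = VNS π := by rw [hsol.eqV π hπ, max_eq_right hG]
  -- main dynamic-programming equations at π
  have e1 : V π = w + P.β * (P.θ false true π * V π + (1 - P.θ false true π) * Vt π) := by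
    have h := hsol.eqVNS π hπ
    rw [hΓ1] at h
    exact eV.trans h
  have e2 : VtS π = P.ξ π + P.β * (P.θ true false π * V π
      + (1 - P.θ true false π) * Vt π) := by
    have h := hsol.eqVtS π hπ
    rw [hγ10, hγ00] at h
    rw [h]; ring
  have e3 : VtNS π = w + P.β * Vt π := by
    have h := hsol.eqVtNS π hπ
    rw [hΓ0, havail π] at h
    rw [h]; ring
  have eVt : Vt π = max (VtS π) (VtNS π) := hsol.eqVt π hπ
  have hRV := restValue_formula P hβ0 hβ1 w π h1 h0
  have hW : w / (1 - P.β) * (1 - P.β) = w := div_mul_cancel₀ w hβne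
  rcases le_total (VtS π) (VtNS π) with hcase | hcase
  · -- the not-play branch dominates everywhere: V π = w/(1-β), restValue ≤ w/(1-β)
    have eu : Vt π = w + P.β * Vt π := eVt.trans ((max_eq_right hcase).trans e3)
    have hu : Vt π = w / (1 - P.β) := by
      rw [eq_div_iff hβne]; linear_combination eu
    -- V π = w/(1-β)
    have e1v : V π * (1 - P.β * P.θ false true π)
        = w + P.β * (1 - P.θ false true π) * Vt π := by linear_combination e1
    have hβa1 : (0:ℝ) < 1 - P.β * P.θ false true π := by nlinarith [h1.1, h1.2]
    have hv : V π = w / (1 - P.β) := by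
      have hu' : Vt π * (1 - P.β) = w := by rw [hu]; exact hW
      have key : (V π * (1 - P.β) - w) * (1 - P.β * P.θ false true π) = 0 := by
        linear_combination (1 - P.β) * e1v + P.β * (1 - P.θ false true π) * hu'
      have := mul_eq_zero.mp key
      rcases this with h | h
      · rw [eq_div_iff hβne]; linarith
      · exfalso; nlinarith
    -- ξ ≤ w
    have hξw : P.ξ π ≤ w := by
      have h4 : VtS π ≤ VtNS π := hcase
      rw [e2, e3, hv, hu] at h4
      ring_nf at h4
      linarith [h4]
    -- restValue ≤ w/(1-β)
    have hle : restValue P w π ≤ w / (1 - P.β) := by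
      have hid : (restValue P w π - w / (1 - P.β))
          * ((1 - P.β) * (1 - P.β * (P.θ false true π - P.θ true false π)))
          = -((w - P.ξ π) * (P.β * (1 - P.θ false true π))) := by
        linear_combination hRV - (1 - P.β * (P.θ false true π - P.θ true false π)) * hW
      nlinarith [hid, mul_pos hβpos hc,
        mul_nonneg (mul_nonneg hβ0.le (sub_nonneg.2 h1.2)) (sub_nonneg.2 hξw)]
    rw [hv, max_eq_right hle]
  · -- the play-when-unavailable branch dominates: V π = restValue
    have eu : Vt π = P.ξ π + P.β * (P.θ true false π * V π
        + (1 - P.θ true false π) * Vt π) := by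
      exact eVt.trans ((max_eq_left hcase).trans e2)
    have hu_ge : w + P.β * Vt π ≤ Vt π := by
      calc w + P.β * Vt π = VtNS π := e3.symm
        _ ≤ max (VtS π) (VtNS π) := le_max_right _ _
        _ = Vt π := eVt.symm
    have hu_ge' : w ≤ Vt π * (1 - P.β) := by
      have hr : Vt π * (1 - P.β) = Vt π - P.β * Vt π := by ring
      linarith [hu_ge, hr]
    have e1v : V π * (1 - P.β * P.θ false true π)
        = w + P.β * (1 - P.θ false true π) * Vt π := by linear_combination e1
    have hβa1 : (0:ℝ) < 1 - P.β * P.θ false true π := by nlinarith [h1.1, h1.2]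
    have hvge : w / (1 - P.β) ≤ V π := by
      rw [div_le_iff₀ hβpos]
      have hid : (V π * (1 - P.β) - w) * (1 - P.β * P.θ false true π)
          = P.β * (1 - P.θ false true π) * (Vt π * (1 - P.β) - w) := by
        linear_combination (1 - P.β) * e1v
      nlinarith [hid, mul_nonneg (mul_nonneg hβ0.le (sub_nonneg.2 h1.2))
        (sub_nonneg.2 hu_ge')]
    have hveq : V π * ((1 - P.β) * (1 - P.β * (P.θ false true π - P.θ true false π)))
        = P.ξ π * (1 - P.β * (P.θ false true π - P.θ true false π))
          + (w - P.ξ π) * (1 - P.β + P.β * P.θ true false π) := by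
      linear_combination (1 - P.β + P.β * P.θ true false π) * e1
        + P.β * (1 - P.θ false true π) * eu
    have hveq2 : V π = restValue P w π := by
      have hXne : ((1 - P.β) * (1 - P.β * (P.θ false true π - P.θ true false π))) ≠ 0 :=
        mul_ne_zero hβne (ne_of_gt hc)
      exact mul_right_cancel₀ hXne (by rw [hveq, hRV])
    rw [← hveq2, max_eq_left hvge]
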